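/- With notation as above, for every β₁ with |β₁| < δ, the rejection probability P(|X| < f_α) is strictly greater than α, i.e., the folded-normal equivalence test is unbiased. -/

import Mathlib

open MeasureTheory ProbabilityTheory

/-- Standard normal CDF. -/
noncomputable def Phi (t : ℝ) : ℝ := ((gaussianReal 0 1) (Set.Iic t)).toReal

section Aux

open Real

lemma phi_even (x : ℝ) : gaussianPDFReal 0 1 (-x) = gaussianPDFReal 0 1 x := by
  simp [gaussianPDFReal, neg_sq]


lemma phi_cont : Continuous (gaussianPDFReal 0 1) := by
  unfold gaussianPDFReal; fun_prop


lemma phi_le {x y : ℝ} (h : x^2 ≤ y^2) :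
    gaussianPDFReal 0 1 y ≤ gaussianPDFReal 0 1 x := by
  unfold gaussianPDFReal
  have h0 : (0:ℝ) < (√(2 * π * (1:NNReal)))⁻¹ := by
    have : (0:ℝ) < 2 * π * (1:NNReal) := by simp [Real.pi_pos]
    positivity
  apply mul_le_mul_of_nonneg_left _ h0.le
  apply Real.exp_le_exp.2
  simp only [sub_zero]
  push_cast
  nlinarith

lemma phi_lt {x y : ℝ} (h : x^2 < y^2) :
    gaussianPDFReal 0 1 y < gaussianPDFReal 0 1 x := by
  unfold gaussianPDFReal
  have h0 : (0:ℝ) < (√(2 * π * (1:NNReal)))⁻¹ := by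
    have : (0:ℝ) < 2 * π * (1:NNReal) := by simp [Real.pi_pos]
    positivity
  apply mul_lt_mul_of_pos_left _ h0
  apply Real.exp_lt_exp.2
  simp only [sub_zero]
  push_cast
  nlinarith

lemma Phi_diff {a b : ℝ} (hab : a ≤ b) :
    Phi b - Phi a = ∫ x in a..b, gaussianPDFReal 0 1 x := by
  have h1 : (gaussianReal 0 1) (Set.Iic a) + (gaussianReal 0 1) (Set.Ioc a b)
      = (gaussianReal 0 1) (Set.Iic b) := by
    rw [← measure_union (Set.Iic_disjoint_Ioc le_rfl) measurableSet_Ioc,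
      Set.Iic_union_Ioc_eq_Iic hab]
  have h2 : Phi b - Phi a = ((gaussianReal 0 1) (Set.Ioc a b)).toReal := by
    unfold Phi
    rw [← h1, ENNReal.toReal_add (measure_ne_top _ _) (measure_ne_top _ _)]
    ring
  rw [h2, gaussianReal_apply_eq_integral 0 one_ne_zero,
    ENNReal.toReal_ofReal (setIntegral_nonneg measurableSet_Ioc
      fun x _ => gaussianPDFReal_nonneg 0 1 x),
    ← intervalIntegral.integral_of_le hab]

lemma Phi_mono : Monotone Phi := fun a b hab =>
  ENNReal.toReal_mono (measure_ne_top _ _) (measure_mono (Set.Iic_subset_Iic.2 hab))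



lemma phi_reflect (a b : ℝ) :
    ∫ x in a..b, gaussianPDFReal 0 1 x = ∫ x in -b..-a, gaussianPDFReal 0 1 x := by
  rw [← intervalIntegral.integral_comp_neg (fun x => gaussianPDFReal 0 1 x)]
  simp only [phi_even]

lemma refl_sq_le {t x : ℝ} (ht : 0 ≤ t) (hx : x ≤ t) : x ^ 2 ≤ (2 * t - x) ^ 2 := by
  nlinarith [mul_nonneg ht (sub_nonneg.2 hx)]

lemma refl_sq_lt {t x : ℝ} (ht : 0 < t) (hx : x < t) : x ^ 2 < (2 * t - x) ^ 2 := by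
  nlinarith [mul_pos ht (sub_pos.2 hx)]

lemma key_ineq {c s m d : ℝ} (hc : 0 < c) (hs : 0 < s) (hm : 0 ≤ m) (hmd : m < d) :
    Phi ((c - d) / s) - Phi ((-c - d) / s) < Phi ((c - m) / s) - Phi ((-c - m) / s) := by
  set a1 := (c - d) / s with ha1
  set b1 := (c - m) / s with hb1
  set a0 := (-c - d) / s with ha0
  set b0 := (-c - m) / s with hb0
  have hcs : 0 < c / s := div_pos hc hs
  have hab1 : a1 < b1 := by rw [ha1, hb1]; gcongr
  have hab0 : a0 < b0 := by rw [ha0, hb0]; gcongr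
  have hb1c : b1 ≤ c / s := by rw [hb1]; gcongr; linarith
  suffices h : Phi b0 - Phi a0 < Phi b1 - Phi a1 by linarith
  rw [Phi_diff hab0.le, Phi_diff hab1.le, phi_reflect a0 b0]
  have e1 : ∫ x in (-b0)..(-a0), gaussianPDFReal 0 1 x
      = ∫ x in a1..b1, gaussianPDFReal 0 1 (2 * c / s - x) := by
    rw [intervalIntegral.integral_comp_sub_left (fun x => gaussianPDFReal 0 1 x) (2 * c / s)]
    have e2 : 2 * c / s - b1 = -b0 := by rw [hb1, hb0]; field_simp; ring
    have e3 : 2 * c / s - a1 = -a0 := by rw [ha1, ha0]; field_simp; ring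
    rw [e2, e3]
  rw [e1]
  apply intervalIntegral.integral_lt_integral_of_continuousOn_of_le_of_exists_lt hab1
    ((phi_cont.comp (by fun_prop)).continuousOn) phi_cont.continuousOn
  · intro x hx
    apply phi_le
    have hxc : x ≤ c / s := le_trans hx.2 hb1c
    rw [mul_div_assoc]; exact refl_sq_le hcs.le hxc
  · refine ⟨a1, Set.left_mem_Icc.2 hab1.le, ?_⟩
    apply phi_lt
    have h2 : a1 < c / s := lt_of_lt_of_le hab1 hb1c
    rw [mul_div_assoc]; exact refl_sq_lt hcs h2

lemma Phi_diff_reflect {a b : ℝ} (hab : a ≤ b) :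
    Phi b - Phi a = Phi (-a) - Phi (-b) := by
  rw [Phi_diff hab, Phi_diff (by linarith : -b ≤ -a), phi_reflect]

lemma Phi_sym {c s : ℝ} (b : ℝ) (hc : 0 < c) (hs : 0 < s) :
    Phi ((c - b) / s) - Phi ((-c - b) / s)
      = Phi ((c - |b|) / s) - Phi ((-c - |b|) / s) := by
  rcases abs_cases b with ⟨h, _⟩ | ⟨h, hb⟩
  · rw [h]
  · rw [h]
    have hle : (-c - b) / s ≤ (c - b) / s := by gcongr; linarith
    rw [Phi_diff_reflect hle]
    congr 1
    · congr 1; field_simp; ring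
    · congr 1; field_simp; ring

lemma gauss_Ioo {a b : ℝ} (hab : a ≤ b) :
    ((gaussianReal 0 1) (Set.Ioo a b)).toReal = Phi b - Phi a := by
  rw [Phi_diff hab, gaussianReal_apply_eq_integral 0 one_ne_zero,
    ENNReal.toReal_ofReal (setIntegral_nonneg measurableSet_Ioo
      fun x _ => gaussianPDFReal_nonneg 0 1 x),
    intervalIntegral.integral_of_le hab, integral_Ioc_eq_integral_Ioo]


/-- Unbiasedness of the folded-normal equivalence test: if `X ~ N(β₁, σ²)` and `f_α`
is the `α`-quantile of the folded normal with parameters `(δ, σ²)`, then for every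
`β₁` with `|β₁| < δ` the rejection probability `P(|X| < f_α)` exceeds `α`. -/
theorem foldedNormal_test_unbiased (δ σ α fα β₁ : ℝ) (hδ : 0 < δ) (hσ : 0 < σ)
    (hα : α ∈ Set.Ioo (0 : ℝ) 1)
    (hq : Phi ((fα - δ) / σ) - Phi ((-fα - δ) / σ) = α) (hβ : |β₁| < δ) :
    α < ((gaussianReal β₁ ⟨σ ^ 2, sq_nonneg σ⟩) {x : ℝ | |x| < fα}).toReal := by
  obtain ⟨hα0, hα1⟩ := hα
  have hfα : 0 < fα := by
    by_contra h
    push_neg at h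
    have hle : (fα - δ) / σ ≤ (-fα - δ) / σ := by gcongr; linarith
    have := Phi_mono hle
    linarith
  have h1 : (gaussianReal 0 1).map (fun x => σ * x)
      = gaussianReal 0 (⟨σ ^ 2, sq_nonneg σ⟩ : NNReal) := by
    have h := gaussianReal_map_const_mul (μ := 0) (v := 1) σ
    rw [h]
    congr 1
    · simp
    · ext; simp; rfl
  have h2 : (gaussianReal 0 (⟨σ ^ 2, sq_nonneg σ⟩ : NNReal)).map (· + β₁)
      = gaussianReal β₁ (⟨σ ^ 2, sq_nonneg σ⟩ : NNReal) := by
    simpa using gaussianReal_map_add_const (μ := 0) (v := ⟨σ ^ 2, sq_nonneg σ⟩) β₁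
  have hmap : gaussianReal β₁ (⟨σ ^ 2, sq_nonneg σ⟩ : NNReal)
      = (gaussianReal 0 1).map (fun x => σ * x + β₁) := by
    rw [← h2, ← h1, Measure.map_map (measurable_add_const β₁) (measurable_const_mul σ)]
    rfl
  have hset : {x : ℝ | |x| < fα} = Set.Ioo (-fα) fα := by
    ext x; simp [abs_lt]
  have hpre : (fun x => σ * x + β₁) ⁻¹' Set.Ioo (-fα) fα
      = Set.Ioo ((-fα - β₁) / σ) ((fα - β₁) / σ) := by
    ext x
    simp only [Set.mem_preimage, Set.mem_Ioo]
    rw [div_lt_iff₀ hσ, lt_div_iff₀ hσ]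
    constructor <;> (rintro ⟨ha, hb⟩; constructor <;> nlinarith [mul_comm σ x])
  have hord : (-fα - β₁) / σ ≤ (fα - β₁) / σ := by gcongr; linarith
  rw [hset, hmap, Measure.map_apply (by fun_prop) measurableSet_Ioo, hpre,
    gauss_Ioo hord, Phi_sym β₁ hfα hσ, ← hq]
  exact key_ineq hfα hσ (abs_nonneg β₁) hβ

end Aux
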